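/- Let P be a lattice polytope in R^3 contained in the unit cube [0,1]^3. Then ls_Delta(P) <= 3, with equality if and only if P = [0,1]^3. -/
import Mathlib


open scoped BigOperators

/-- Width of a set `P ⊆ ℝ^d` in direction `h`. -/
noncomputable def width {d : ℕ} (P : Set (Fin d → ℝ)) (h : Fin d → ℝ) : ℝ :=
  sSup ((fun x => ∑ i, h i * x i) '' P) - sInf ((fun x => ∑ i, h i * x i) '' P)

/-- Cast an integer vector to a real vector. -/
def zcast {d : ℕ} (h : Fin d → ℤ) : Fin d → ℝ := fun i => (h i : ℝ)

/-- A lattice polytope: the convex hull of a nonempty finite set of integer points. -/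
def IsLatticePolytope {d : ℕ} (P : Set (Fin d → ℝ)) : Prop :=
  ∃ V : Finset (Fin d → ℝ), V.Nonempty ∧ (∀ v ∈ V, ∀ i, ∃ n : ℤ, v i = (n : ℝ)) ∧
    P = convexHull ℝ (V : Set (Fin d → ℝ))

/-- `l₁` of a subset of `ℝ³`. -/
noncomputable def lone3 (P : Set (Fin 3 → ℝ)) : ℝ :=
  sSup ((fun x => x 0 + x 1 + x 2) '' P) - sInf ((fun x => x 0) '' P) -
    sInf ((fun x => x 1) '' P) - sInf ((fun x => x 2) '' P)

/-- `l₁` of a subset of `ℝ²`. -/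
noncomputable def lone2 (P : Set (Fin 2 → ℝ)) : ℝ :=
  sSup ((fun x => x 0 + x 1) '' P) - sInf ((fun x => x 0) '' P) - sInf ((fun x => x 1) '' P)

/-- Lattice size of a subset of `ℝ³` with respect to the standard simplex. -/
noncomputable def lsDelta3 (P : Set (Fin 3 → ℝ)) : ℝ :=
  sInf {r : ℝ | ∃ A : Matrix (Fin 3) (Fin 3) ℤ, IsUnit A.det ∧ ∃ v : Fin 3 → ℤ,
    r = lone3 ((fun x => Matrix.mulVec (A.map (Int.cast : ℤ → ℝ)) x + zcast v) '' P)}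

/-- Lattice size of a subset of `ℝ²` with respect to the standard simplex. -/
noncomputable def lsDelta2 (P : Set (Fin 2 → ℝ)) : ℝ :=
  sInf {r : ℝ | ∃ A : Matrix (Fin 2) (Fin 2) ℤ, IsUnit A.det ∧ ∃ v : Fin 2 → ℤ,
    r = lone2 ((fun x => Matrix.mulVec (A.map (Int.cast : ℤ → ℝ)) x + zcast v) '' P)}

/-! ### Auxiliary lemmas -/

abbrev Aff3 (f : (Fin 3 → ℝ) → ℝ) : Prop :=
  ∀ (a b : ℝ) (x y : Fin 3 → ℝ), 0 ≤ a → 0 ≤ b → a + b = 1 →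
    f (a • x + b • y) = a * f x + b * f y

lemma hull_le {f : (Fin 3 → ℝ) → ℝ} (hf : Aff3 f) {V : Set (Fin 3 → ℝ)} {M : ℝ}
    (h : ∀ v ∈ V, f v ≤ M) : ∀ x ∈ convexHull ℝ V, f x ≤ M := by
  intro x hx
  have hc : Convex ℝ {y : Fin 3 → ℝ | f y ≤ M} := by
    intro p hp q hq a b ha hb hab
    simp only [Set.mem_setOf_eq] at *
    rw [hf a b p q ha hb hab]
    have h1 := mul_le_mul_of_nonneg_left hp ha
    have h2 := mul_le_mul_of_nonneg_left hq hb
    have h3 : a * M + b * M = M := by rw [← add_mul, hab, one_mul]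
    linarith
  exact convexHull_min h hc hx

lemma hull_ge {f : (Fin 3 → ℝ) → ℝ} (hf : Aff3 f) {V : Set (Fin 3 → ℝ)} {M : ℝ}
    (h : ∀ v ∈ V, M ≤ f v) : ∀ x ∈ convexHull ℝ V, M ≤ f x := by
  intro x hx
  have hc : Convex ℝ {y : Fin 3 → ℝ | M ≤ f y} := by
    intro p hp q hq a b ha hb hab
    simp only [Set.mem_setOf_eq] at *
    rw [hf a b p q ha hb hab]
    have h1 := mul_le_mul_of_nonneg_left hp ha
    have h2 := mul_le_mul_of_nonneg_left hq hb
    have h3 : a * M + b * M = M := by rw [← add_mul, hab, one_mul]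
    linarith
  exact convexHull_min h hc hx

lemma aff_sumT (A : Matrix (Fin 3) (Fin 3) ℝ) (v : Fin 3 → ℝ) :
    Aff3 (fun x => (A.mulVec x + v) 0 + (A.mulVec x + v) 1 + (A.mulVec x + v) 2) := by
  intro a b x y ha hb hab
  have hb' : b = 1 - a := by linarith
  subst hb'
  simp only [Matrix.mulVec_add, Matrix.mulVec_smul, Pi.add_apply, Pi.smul_apply, smul_eq_mul]
  ring

lemma aff_coordT (A : Matrix (Fin 3) (Fin 3) ℝ) (v : Fin 3 → ℝ) (i : Fin 3) :
    Aff3 (fun x => (A.mulVec x + v) i) := by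
  intro a b x y ha hb hab
  have hb' : b = 1 - a := by linarith
  subst hb'
  simp only [Matrix.mulVec_add, Matrix.mulVec_smul, Pi.add_apply, Pi.smul_apply, smul_eq_mul]
  ring

lemma bddAbove_img {f : (Fin 3 → ℝ) → ℝ} (hf : Aff3 f) (V : Finset (Fin 3 → ℝ))
    (hne : V.Nonempty) : BddAbove (f '' convexHull ℝ (V : Set (Fin 3 → ℝ))) := by
  refine ⟨(V.image f).max' (hne.image f), ?_⟩
  rintro r ⟨x, hx, rfl⟩
  exact hull_le hf (fun w hw => Finset.le_max' _ _ (Finset.mem_image_of_mem f hw)) x hx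

lemma bddBelow_img {f : (Fin 3 → ℝ) → ℝ} (hf : Aff3 f) (V : Finset (Fin 3 → ℝ))
    (hne : V.Nonempty) : BddBelow (f '' convexHull ℝ (V : Set (Fin 3 → ℝ))) := by
  refine ⟨(V.image f).min' (hne.image f), ?_⟩
  rintro r ⟨x, hx, rfl⟩
  exact hull_ge hf (fun w hw => Finset.min'_le _ _ (Finset.mem_image_of_mem f hw)) x hx

lemma lone3_image_ge (V : Finset (Fin 3 → ℝ)) (hne : V.Nonempty)
    (A : Matrix (Fin 3) (Fin 3) ℝ) (v : Fin 3 → ℝ)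
    (p q0 q1 q2 : Fin 3 → ℝ) (hp : p ∈ convexHull ℝ (V : Set (Fin 3 → ℝ)))
    (hq0 : q0 ∈ convexHull ℝ (V : Set (Fin 3 → ℝ)))
    (hq1 : q1 ∈ convexHull ℝ (V : Set (Fin 3 → ℝ)))
    (hq2 : q2 ∈ convexHull ℝ (V : Set (Fin 3 → ℝ))) :
    ((A.mulVec p + v) 0 + (A.mulVec p + v) 1 + (A.mulVec p + v) 2)
      - (A.mulVec q0 + v) 0 - (A.mulVec q1 + v) 1 - (A.mulVec q2 + v) 2
      ≤ lone3 ((fun x => A.mulVec x + v) '' (convexHull ℝ (V : Set (Fin 3 → ℝ)))) := by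
  unfold lone3
  rw [Set.image_image, Set.image_image, Set.image_image, Set.image_image]
  have h1 : ((A.mulVec p + v) 0 + (A.mulVec p + v) 1 + (A.mulVec p + v) 2) ≤
      sSup ((fun x => (A.mulVec x + v) 0 + (A.mulVec x + v) 1 + (A.mulVec x + v) 2) ''
        convexHull ℝ (V : Set (Fin 3 → ℝ))) :=
    le_csSup (bddAbove_img (aff_sumT A v) V hne) (Set.mem_image_of_mem _ hp)
  have h2 : sInf ((fun x => (A.mulVec x + v) 0) '' convexHull ℝ (V : Set (Fin 3 → ℝ)))
      ≤ (A.mulVec q0 + v) 0 :=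
    csInf_le (bddBelow_img (aff_coordT A v 0) V hne) (Set.mem_image_of_mem _ hq0)
  have h3 : sInf ((fun x => (A.mulVec x + v) 1) '' convexHull ℝ (V : Set (Fin 3 → ℝ)))
      ≤ (A.mulVec q1 + v) 1 :=
    csInf_le (bddBelow_img (aff_coordT A v 1) V hne) (Set.mem_image_of_mem _ hq1)
  have h4 : sInf ((fun x => (A.mulVec x + v) 2) '' convexHull ℝ (V : Set (Fin 3 → ℝ)))
      ≤ (A.mulVec q2 + v) 2 :=
    csInf_le (bddBelow_img (aff_coordT A v 2) V hne) (Set.mem_image_of_mem _ hq2)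
  linarith

lemma lone3_image_le (V : Finset (Fin 3 → ℝ)) (hne : V.Nonempty)
    (A : Matrix (Fin 3) (Fin 3) ℝ) (v : Fin 3 → ℝ) (Ms m0 m1 m2 : ℝ)
    (hMs : ∀ w ∈ (V : Set (Fin 3 → ℝ)), (A.mulVec w + v) 0 + (A.mulVec w + v) 1 + (A.mulVec w + v) 2 ≤ Ms)
    (h0 : ∀ w ∈ (V : Set (Fin 3 → ℝ)), m0 ≤ (A.mulVec w + v) 0)
    (h1 : ∀ w ∈ (V : Set (Fin 3 → ℝ)), m1 ≤ (A.mulVec w + v) 1)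
    (h2 : ∀ w ∈ (V : Set (Fin 3 → ℝ)), m2 ≤ (A.mulVec w + v) 2) :
    lone3 ((fun x => A.mulVec x + v) '' (convexHull ℝ (V : Set (Fin 3 → ℝ)))) ≤ Ms - m0 - m1 - m2 := by
  unfold lone3
  rw [Set.image_image, Set.image_image, Set.image_image, Set.image_image]
  obtain ⟨w0, hw0⟩ := hne
  have hw0' : w0 ∈ convexHull ℝ (V : Set (Fin 3 → ℝ)) := subset_convexHull ℝ _ hw0
  have hs : sSup ((fun x => (A.mulVec x + v) 0 + (A.mulVec x + v) 1 + (A.mulVec x + v) 2) ''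
      convexHull ℝ (V : Set (Fin 3 → ℝ))) ≤ Ms := by
    refine csSup_le ⟨_, Set.mem_image_of_mem _ hw0'⟩ ?_
    rintro r ⟨x, hx, rfl⟩
    exact hull_le (aff_sumT A v) hMs x hx
  have hi0 : m0 ≤ sInf ((fun x => (A.mulVec x + v) 0) '' convexHull ℝ (V : Set (Fin 3 → ℝ))) := by
    refine le_csInf ⟨_, Set.mem_image_of_mem _ hw0'⟩ ?_
    rintro r ⟨x, hx, rfl⟩
    exact hull_ge (aff_coordT A v 0) h0 x hx
  have hi1 : m1 ≤ sInf ((fun x => (A.mulVec x + v) 1) '' convexHull ℝ (V : Set (Fin 3 → ℝ))) := by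
    refine le_csInf ⟨_, Set.mem_image_of_mem _ hw0'⟩ ?_
    rintro r ⟨x, hx, rfl⟩
    exact hull_ge (aff_coordT A v 1) h1 x hx
  have hi2 : m2 ≤ sInf ((fun x => (A.mulVec x + v) 2) '' convexHull ℝ (V : Set (Fin 3 → ℝ))) := by
    refine le_csInf ⟨_, Set.mem_image_of_mem _ hw0'⟩ ?_
    rintro r ⟨x, hx, rfl⟩
    exact hull_ge (aff_coordT A v 2) h2 x hx
  linarith

lemma colR (a0 a1 a2 : ℤ) (h : ¬(a0 = 0 ∧ a1 = 0 ∧ a2 = 0)) :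
    (1:ℝ) ≤ ((a0:ℝ) * (if 0 ≤ a0 + a1 + a2 then (1:ℝ) else 0)
            + (a1:ℝ) * (if 0 ≤ a0 + a1 + a2 then (1:ℝ) else 0)
            + (a2:ℝ) * (if 0 ≤ a0 + a1 + a2 then (1:ℝ) else 0))
        - ((a0:ℝ) * (if a0 < 0 then (1:ℝ) else 0))
        - ((a1:ℝ) * (if a1 < 0 then (1:ℝ) else 0))
        - ((a2:ℝ) * (if a2 < 0 then (1:ℝ) else 0)) := by
  have key : (1:ℤ) ≤ (if 0 ≤ a0 + a1 + a2 then a0 + a1 + a2 else 0)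
      - (if a0 < 0 then a0 else 0) - (if a1 < 0 then a1 else 0) - (if a2 < 0 then a2 else 0) := by
    split_ifs <;> omega
  split_ifs at key ⊢ <;>
    (have kr := (Int.cast_le (R := ℝ)).mpr key; push_cast at kr; linarith)

lemma elem_ge_three (V : Finset (Fin 3 → ℝ)) (hne : V.Nonempty)
    (hcube : convexHull ℝ (V : Set (Fin 3 → ℝ)) = {x | ∀ i, 0 ≤ x i ∧ x i ≤ 1})
    (A : Matrix (Fin 3) (Fin 3) ℤ) (hA : IsUnit A.det) (v : Fin 3 → ℤ) :
    3 ≤ lone3 ((fun x => Matrix.mulVec (A.map (Int.cast : ℤ → ℝ)) x + zcast v) ''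
      (convexHull ℝ (V : Set (Fin 3 → ℝ)))) := by
  have hd : A.det ≠ 0 := hA.ne_zero
  have hcol : ∀ j : Fin 3, ¬(A 0 j = 0 ∧ A 1 j = 0 ∧ A 2 j = 0) := by
    intro j hj
    exact hd (Matrix.det_eq_zero_of_column_eq_zero j (fun i => by fin_cases i <;> tauto))
  have hmem : ∀ w : Fin 3 → ℝ, (∀ i, w i = 0 ∨ w i = 1) →
      w ∈ convexHull ℝ (V : Set (Fin 3 → ℝ)) := by
    intro w hw
    rw [hcube]
    intro i
    rcases hw i with h | h <;> rw [h] <;> norm_num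
  have hLB := lone3_image_ge V hne (A.map (Int.cast : ℤ → ℝ)) (zcast v)
    (fun j => if 0 ≤ A 0 j + A 1 j + A 2 j then 1 else 0)
    (fun j => if A 0 j < 0 then 1 else 0)
    (fun j => if A 1 j < 0 then 1 else 0)
    (fun j => if A 2 j < 0 then 1 else 0)
    (hmem _ (fun j => by split_ifs <;> simp))
    (hmem _ (fun j => by split_ifs <;> simp))
    (hmem _ (fun j => by split_ifs <;> simp))
    (hmem _ (fun j => by split_ifs <;> simp))
  refine le_trans ?_ hLB
  simp only [Matrix.mulVec, dotProduct, Fin.sum_univ_three, Matrix.map_apply,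
    Pi.add_apply, zcast]
  have c0 := colR (A 0 0) (A 1 0) (A 2 0) (hcol 0)
  have c1 := colR (A 0 1) (A 1 1) (A 2 1) (hcol 1)
  have c2 := colR (A 0 2) (A 1 2) (A 2 2) (hcol 2)
  linarith

lemma cube_subset_hull_verts :
    {x : Fin 3 → ℝ | ∀ i, 0 ≤ x i ∧ x i ≤ 1} ⊆
      convexHull ℝ (Set.pi Set.univ (fun _ : Fin 3 => ({0, 1} : Set ℝ))) := by
  intro x hx
  apply mem_convexHull_pi
  intro i _
  rw [convexHull_pair, segment_eq_Icc (by norm_num : (0:ℝ) ≤ 1)]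
  exact ⟨(hx i).1, (hx i).2⟩

lemma flip_elem_le_two (V : Finset (Fin 3 → ℝ)) (hne : V.Nonempty)
    (hV01 : ∀ u ∈ V, ∀ i, u i = 0 ∨ u i = 1)
    (w : Fin 3 → ℝ) (hw : ∀ i, w i = 0 ∨ w i = 1)
    (hwP : w ∉ convexHull ℝ (V : Set (Fin 3 → ℝ))) :
    ∃ A : Matrix (Fin 3) (Fin 3) ℤ, IsUnit A.det ∧ ∃ v : Fin 3 → ℤ,
      lone3 ((fun x => Matrix.mulVec (A.map (Int.cast : ℤ → ℝ)) x + zcast v) ''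
        (convexHull ℝ (V : Set (Fin 3 → ℝ)))) ≤ 2 := by
  classical
  set d : Fin 3 → ℤ := fun i => if w i = 1 then 1 else -1 with hd
  set v : Fin 3 → ℤ := fun i => if w i = 1 then 0 else 1 with hv
  refine ⟨Matrix.diagonal d, ?_, v, ?_⟩
  · rw [Matrix.det_diagonal, Fin.prod_univ_three]
    simp only [hd]
    split_ifs <;> norm_num
  · have hT : ∀ (u : Fin 3 → ℝ) (j : Fin 3),
        (((Matrix.diagonal d).map (Int.cast : ℤ → ℝ)).mulVec u + zcast v) j
          = (d j : ℝ) * u j + (v j : ℝ) := by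
      intro u j
      rw [Pi.add_apply, Matrix.diagonal_map (by norm_num), Matrix.mulVec_diagonal]
      simp [zcast]
    have hbd : ∀ u ∈ V, ∀ j, (0:ℝ) ≤ (d j : ℝ) * u j + (v j : ℝ) ∧ (d j : ℝ) * u j + (v j : ℝ) ≤ 1 := by
      intro u hu j
      rcases hV01 u hu j with h | h <;>
        · simp only [hd, hv, h]
          split_ifs <;> norm_num
    have hzero : ∀ u ∈ V, ∃ j, (d j : ℝ) * u j + (v j : ℝ) = 0 := by
      intro u hu
      have hne' : u ≠ w := fun h => hwP (h ▸ subset_convexHull ℝ _ hu)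
      have : ∃ j, u j ≠ w j := by
        by_contra hc
        push_neg at hc
        exact hne' (funext hc)
      obtain ⟨j, hj⟩ := this
      refine ⟨j, ?_⟩
      rcases hV01 u hu j with h | h <;> rcases hw j with h' | h' <;>
        (simp only [hd, hv, h, h'] at hj ⊢ <;> (try split_ifs) <;> norm_num at *)
    have := lone3_image_le V hne ((Matrix.diagonal d).map (Int.cast : ℤ → ℝ)) (zcast v) 2 0 0 0
      (by
        intro u hu
        rw [hT, hT, hT]
        have hj3 : ∀ p : Fin 3 → Prop, (∃ j, p j) → p 0 ∨ p 1 ∨ p 2 := by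
          rintro p ⟨j, hj⟩
          fin_cases j
          · exact Or.inl hj
          · exact Or.inr (Or.inl hj)
          · exact Or.inr (Or.inr hj)
        have h0 := hbd u hu 0
        have h1 := hbd u hu 1
        have h2 := hbd u hu 2
        rcases hj3 (fun j => (d j : ℝ) * u j + (v j : ℝ) = 0) (hzero u hu) with hj | hj | hj <;>
          linarith [hj, h0.1, h0.2, h1.1, h1.2, h2.1, h2.2])
      (fun u hu => by rw [hT]; exact (hbd u hu 0).1)
      (fun u hu => by rw [hT]; exact (hbd u hu 1).1)
      (fun u hu => by rw [hT]; exact (hbd u hu 2).1)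
    calc lone3 _ ≤ 2 - 0 - 0 - 0 := this
    _ = 2 := by norm_num

lemma one_map_mulVec (x : Fin 3 → ℝ) :
    Matrix.mulVec ((1 : Matrix (Fin 3) (Fin 3) ℤ).map (Int.cast : ℤ → ℝ)) x
      + zcast (0 : Fin 3 → ℤ) = x := by
  rw [Matrix.map_one _ Int.cast_zero Int.cast_one, Matrix.one_mulVec]
  funext i
  simp [zcast]

theorem lsDelta3_le_three_of_subset_cube (P : Set (Fin 3 → ℝ)) (hP : IsLatticePolytope P)
    (hcube : P ⊆ {x | ∀ i, 0 ≤ x i ∧ x i ≤ 1}) :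
    lsDelta3 P ≤ 3 ∧ (lsDelta3 P = 3 ↔ P = {x | ∀ i, 0 ≤ x i ∧ x i ≤ 1}) := by
  obtain ⟨V, hne, hlat, hPV⟩ := hP
  subst hPV
  set Cube : Set (Fin 3 → ℝ) := {x | ∀ i, 0 ≤ x i ∧ x i ≤ 1} with hCube
  set S : Set ℝ := {r : ℝ | ∃ A : Matrix (Fin 3) (Fin 3) ℤ, IsUnit A.det ∧ ∃ v : Fin 3 → ℤ,
    r = lone3 ((fun x => Matrix.mulVec (A.map (Int.cast : ℤ → ℝ)) x + zcast v) ''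
      (convexHull ℝ (V : Set (Fin 3 → ℝ))))} with hS
  have hVsub : ∀ u ∈ V, ∀ i, 0 ≤ u i ∧ u i ≤ 1 := by
    intro u hu i
    exact hcube (subset_convexHull ℝ _ hu) i
  -- every element of S is nonnegative
  have hbdd : BddBelow S := by
    refine ⟨0, ?_⟩
    rintro r ⟨A, hA, v, rfl⟩
    obtain ⟨w0, hw0⟩ := id hne
    have hw0' : w0 ∈ convexHull ℝ (V : Set (Fin 3 → ℝ)) := subset_convexHull ℝ _ hw0
    have h := lone3_image_ge V hne (A.map (Int.cast : ℤ → ℝ)) (zcast v)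
      w0 w0 w0 w0 hw0' hw0' hw0' hw0'
    linarith
  -- the identity element of S
  have hidmem : lone3 ((fun x => Matrix.mulVec ((1 : Matrix (Fin 3) (Fin 3) ℤ).map
      (Int.cast : ℤ → ℝ)) x + zcast (0 : Fin 3 → ℤ)) ''
      (convexHull ℝ (V : Set (Fin 3 → ℝ)))) ∈ S := by
    refine ⟨1, ?_, 0, rfl⟩
    rw [Matrix.det_one]
    exact isUnit_one
  have hidle : lone3 ((fun x => Matrix.mulVec ((1 : Matrix (Fin 3) (Fin 3) ℤ).map
      (Int.cast : ℤ → ℝ)) x + zcast (0 : Fin 3 → ℤ)) ''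
      (convexHull ℝ (V : Set (Fin 3 → ℝ)))) ≤ 3 := by
    have := lone3_image_le V hne ((1 : Matrix (Fin 3) (Fin 3) ℤ).map (Int.cast : ℤ → ℝ))
      (zcast (0 : Fin 3 → ℤ)) 3 0 0 0
      (by intro u hu
          rw [show ((1 : Matrix (Fin 3) (Fin 3) ℤ).map (Int.cast : ℤ → ℝ)).mulVec u
              + zcast (0 : Fin 3 → ℤ) = u from one_map_mulVec u]
          have h0 := hVsub u hu 0
          have h1 := hVsub u hu 1
          have h2 := hVsub u hu 2
          linarith [h0.1, h0.2, h1.1, h1.2, h2.1, h2.2])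
      (by intro u hu
          rw [show ((1 : Matrix (Fin 3) (Fin 3) ℤ).map (Int.cast : ℤ → ℝ)).mulVec u
              + zcast (0 : Fin 3 → ℤ) = u from one_map_mulVec u]
          exact (hVsub u hu 0).1)
      (by intro u hu
          rw [show ((1 : Matrix (Fin 3) (Fin 3) ℤ).map (Int.cast : ℤ → ℝ)).mulVec u
              + zcast (0 : Fin 3 → ℤ) = u from one_map_mulVec u]
          exact (hVsub u hu 1).1)
      (by intro u hu
          rw [show ((1 : Matrix (Fin 3) (Fin 3) ℤ).map (Int.cast : ℤ → ℝ)).mulVec u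
              + zcast (0 : Fin 3 → ℤ) = u from one_map_mulVec u]
          exact (hVsub u hu 2).1)
    calc lone3 _ ≤ 3 - 0 - 0 - 0 := this
    _ = 3 := by norm_num
  have hls : lsDelta3 (convexHull ℝ (V : Set (Fin 3 → ℝ))) = sInf S := rfl
  have part1 : lsDelta3 (convexHull ℝ (V : Set (Fin 3 → ℝ))) ≤ 3 := by
    rw [hls]
    exact le_trans (csInf_le hbdd hidmem) hidle
  refine ⟨part1, ?_, ?_⟩
  · -- lsDelta3 = 3 → P = Cube
    intro h3
    by_contra hneq
    -- V has 0/1 coordinates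
    have hV01 : ∀ u ∈ V, ∀ i, u i = 0 ∨ u i = 1 := by
      intro u hu i
      obtain ⟨n, hn⟩ := hlat u hu i
      have hb := hVsub u hu i
      rw [hn] at hb ⊢
      have h1 : (0:ℤ) ≤ n := by exact_mod_cast hb.1
      have h2 : n ≤ 1 := by exact_mod_cast hb.2
      have : n = 0 ∨ n = 1 := by omega
      rcases this with h | h <;> rw [h] <;> norm_num
    -- there is a cube vertex not in P
    have hvert : ∃ w : Fin 3 → ℝ, (∀ i, w i = 0 ∨ w i = 1) ∧
        w ∉ convexHull ℝ (V : Set (Fin 3 → ℝ)) := by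
      by_contra hc
      push_neg at hc
      apply hneq
      refine Set.Subset.antisymm hcube ?_
      intro x hx
      have hx' := cube_subset_hull_verts hx
      refine convexHull_min ?_ (convex_convexHull ℝ _) hx'
      intro y hy
      apply hc y
      intro i
      have := hy i (Set.mem_univ i)
      simpa using this
    obtain ⟨w, hw01, hwP⟩ := hvert
    obtain ⟨A, hA, v, hle2⟩ := flip_elem_le_two V hne hV01 w hw01 hwP
    have : sInf S ≤ 2 := le_trans (csInf_le hbdd ⟨A, hA, v, rfl⟩) hle2
    rw [hls] at h3
    linarith
  · -- P = Cube → lsDelta3 = 3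
    intro hPC
    rw [hls]
    have hge : 3 ≤ sInf S := by
      refine le_csInf ⟨_, hidmem⟩ ?_
      rintro r ⟨A, hA, v, rfl⟩
      exact elem_ge_three V hne hPC A hA v
    have hle : sInf S ≤ 3 := le_trans (csInf_le hbdd hidmem) hidle
    linarith
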